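/- Let K ⊆ ℂ be compact and let L ≥ 0. Let f : ℂ → ℝ be continuous, and suppose that |f(z) − f(w)| ≤ L·|z − w| whenever the closed line segment from z to w does not intersect K. Then for any piecewise-linear path γ from z to w consisting of finitely many line segments and intersecting K in at most finitely many points, one has |f(z) − f(w)| ≤ L·ℓ(γ), where ℓ(γ) denotes the length of γ. -/

import Mathlib

open Set Filter AffineMap Topology

private lemma seg_bound (K : Set ℂ) (L : ℝ) (hL : 0 ≤ L)
    (f : ℂ → ℝ) (hf : Continuous f)
    (hseg : ∀ z w : ℂ, Disjoint (segment ℝ z w) K → |f z - f w| ≤ L * dist z w)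
    (a b : ℂ) (hfin : (K ∩ segment ℝ a b).Finite) :
    |f a - f b| ≤ L * dist a b := by
  rcases eq_or_ne a b with rfl | hab
  · simp [mul_nonneg hL dist_nonneg]
  set pt : ℝ → ℂ := fun t => AffineMap.lineMap a b t with hptdef
  have hptinj : Function.Injective pt := lineMap_injective ℝ hab
  set d := dist a b with hd
  set g : ℝ → ℝ := fun t => f (pt t) with hgdef
  have hptc : Continuous pt := lineMap_continuous
  have hgc : Continuous g := hf.comp hptc
  set S : Set ℝ := {t : ℝ | t ∈ Icc (0:ℝ) 1 ∧ pt t ∈ K} with hSdef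
  have hSfin : S.Finite := by
    have hsub : S ⊆ pt ⁻¹' (K ∩ segment ℝ a b) := by
      rintro t ⟨ht, htK⟩
      exact ⟨htK, by rw [segment_eq_image_lineMap]; exact ⟨t, ht, rfl⟩⟩
    exact ((hfin.preimage hptinj.injOn).subset hsub)
  -- base case: no interior bad points
  have base : ∀ s t : ℝ, s ∈ Icc (0:ℝ) 1 → t ∈ Icc (0:ℝ) 1 → s ≤ t →
      S ∩ Ioo s t = ∅ → |g s - g t| ≤ L * ((t - s) * d) := by
    intro s t hs ht hst hempty
    rcases eq_or_lt_of_le hst with rfl | hlt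
    · simp
    -- interior segments avoid K entirely
    have key : ∀ s' t' : ℝ, s < s' → s' ≤ t' → t' < t →
        |g s' - g t'| ≤ L * ((t' - s') * d) := by
      intro s' t' hss' hs't' ht't
      have hIcc : Icc s' t' ⊆ Ioo s t := fun x hx => ⟨lt_of_lt_of_le hss' hx.1,
        lt_of_le_of_lt hx.2 ht't⟩
      have hseg_eq : segment ℝ (pt s') (pt t') = pt '' Icc s' t' := by
        rw [← segment_eq_Icc hs't']
        exact (image_segment (𝕜 := ℝ) (AffineMap.lineMap a b) s' t').symm
      have hdisj : Disjoint (segment ℝ (pt s') (pt t')) K := by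
        rw [hseg_eq, Set.disjoint_left]
        rintro x ⟨u, hu, rfl⟩ hxK
        have huIoo := hIcc hu
        have hu01 : u ∈ Icc (0:ℝ) 1 :=
          ⟨le_trans hs.1 huIoo.1.le, le_trans huIoo.2.le ht.2⟩
        have : u ∈ S ∩ Ioo s t := ⟨⟨hu01, hxK⟩, huIoo⟩
        rw [hempty] at this
        exact this
      have := hseg (pt s') (pt t') hdisj
      have hdist : dist (pt s') (pt t') = (t' - s') * d := by
        rw [hptdef, hd]
        simp only [dist_lineMap_lineMap]
        rw [Real.dist_eq, abs_of_nonpos (by linarith)]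
        ring_nf
      rw [hdist] at this
      exact this
    -- step 1: extend to left endpoint, for t' in the open interval
    have claim1 : ∀ t' ∈ Ioo s t, |g s - g t'| ≤ L * ((t' - s) * d) := by
      intro t' ht'
      haveI : (𝓝[Ioo s t'] s).NeBot := by
        apply mem_closure_iff_nhdsWithin_neBot.mp
        rw [closure_Ioo (ne_of_lt ht'.1)]
        exact ⟨le_refl _, ht'.1.le⟩
      have h1 : Tendsto (fun s' => |g s' - g t'|) (𝓝[Ioo s t'] s) (𝓝 |g s - g t'|) :=
        (((hgc.sub continuous_const).abs).tendsto s).mono_left nhdsWithin_le_nhds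
      have h2 : Tendsto (fun s' => L * ((t' - s') * d)) (𝓝[Ioo s t'] s)
          (𝓝 (L * ((t' - s) * d))) := by
        apply Tendsto.mono_left _ nhdsWithin_le_nhds
        exact (Continuous.tendsto (by continuity) s)
      refine le_of_tendsto_of_tendsto h1 h2 ?_
      filter_upwards [eventually_mem_nhdsWithin] with s' hs'
      exact key s' t' hs'.1 hs'.2.le ht'.2
    -- step 2: extend to right endpoint
    haveI : (𝓝[Ioo s t] t).NeBot := by
      apply mem_closure_iff_nhdsWithin_neBot.mp
      rw [closure_Ioo (ne_of_lt hlt)]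
      exact ⟨hlt.le, le_refl _⟩
    have h1 : Tendsto (fun t' => |g s - g t'|) (𝓝[Ioo s t] t) (𝓝 |g s - g t|) :=
      (((continuous_const.sub hgc).abs).tendsto t).mono_left nhdsWithin_le_nhds
    have h2 : Tendsto (fun t' => L * ((t' - s) * d)) (𝓝[Ioo s t] t)
        (𝓝 (L * ((t - s) * d))) := by
      apply Tendsto.mono_left _ nhdsWithin_le_nhds
      exact (Continuous.tendsto (by continuity) t)
    refine le_of_tendsto_of_tendsto h1 h2 ?_
    filter_upwards [eventually_mem_nhdsWithin] with t' ht'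
    exact claim1 t' ht'
  -- main induction on the number of interior bad points
  have main : ∀ n : ℕ, ∀ s t : ℝ, s ∈ Icc (0:ℝ) 1 → t ∈ Icc (0:ℝ) 1 → s ≤ t →
      (S ∩ Ioo s t).ncard ≤ n → |g s - g t| ≤ L * ((t - s) * d) := by
    intro n
    induction n with
    | zero =>
      intro s t hs ht hst hcard
      have hfin' : (S ∩ Ioo s t).Finite := hSfin.inter_of_left _
      exact base s t hs ht hst ((Set.ncard_eq_zero hfin').mp (Nat.le_zero.mp hcard))
    | succ n ih =>
      intro s t hs ht hst hcard
      rcases Set.eq_empty_or_nonempty (S ∩ Ioo s t) with he | ⟨u, huS, hu⟩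
      · exact base s t hs ht hst he
      have hfin' : (S ∩ Ioo s t).Finite := hSfin.inter_of_left _
      have hu01 : u ∈ Icc (0:ℝ) 1 := huS.1
      have humem : u ∈ S ∩ Ioo s t := ⟨huS, hu⟩
      have hcard1 : (S ∩ Ioo s u).ncard ≤ n := by
        have hsub : S ∩ Ioo s u ⊆ (S ∩ Ioo s t) \ {u} := by
          rintro x ⟨hxS, hx1, hx2⟩
          refine ⟨⟨hxS, hx1, hx2.trans hu.2⟩, ?_⟩
          intro hmem
          rw [Set.mem_singleton_iff] at hmem
          subst hmem
          exact absurd hx2 (lt_irrefl x)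
        have h1 := Set.ncard_le_ncard hsub hfin'.diff
        have h2 := Set.ncard_diff_singleton_lt_of_mem humem hfin'
        omega
      have hcard2 : (S ∩ Ioo u t).ncard ≤ n := by
        have hsub : S ∩ Ioo u t ⊆ (S ∩ Ioo s t) \ {u} := by
          rintro x ⟨hxS, hx1, hx2⟩
          refine ⟨⟨hxS, hu.1.trans hx1, hx2⟩, ?_⟩
          intro hmem
          rw [Set.mem_singleton_iff] at hmem
          subst hmem
          exact absurd hx1 (lt_irrefl x)
        have h1 := Set.ncard_le_ncard hsub hfin'.diff
        have h2 := Set.ncard_diff_singleton_lt_of_mem humem hfin'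
        omega
      have b1 := ih s u hs hu01 hu.1.le hcard1
      have b2 := ih u t hu01 ht hu.2.le hcard2
      calc |g s - g t| ≤ |g s - g u| + |g u - g t| := abs_sub_le _ _ _
        _ ≤ L * ((u - s) * d) + L * ((t - u) * d) := add_le_add b1 b2
        _ = L * ((t - s) * d) := by ring
  have h01 := main (S ∩ Ioo (0:ℝ) 1).ncard 0 1 (by norm_num) (by norm_num) (by norm_num)
    (le_refl _)
  have hg0 : g 0 = f a := by simp [hgdef, hptdef]
  have hg1 : g 1 = f b := by simp [hgdef, hptdef]
  rw [hg0, hg1] at h01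
  simpa using h01

theorem stmt_14 (K : Set ℂ) (hK : IsCompact K) (L : ℝ) (hL : 0 ≤ L)
    (f : ℂ → ℝ) (hf : Continuous f)
    (hseg : ∀ z w : ℂ, Disjoint (segment ℝ z w) K → |f z - f w| ≤ L * dist z w)
    (N : ℕ) (p : ℕ → ℂ)
    (hfin : (K ∩ ⋃ i ∈ Finset.range N, segment ℝ (p i) (p (i + 1))).Finite) :
    |f (p 0) - f (p N)| ≤ L * ∑ i ∈ Finset.range N, dist (p i) (p (i + 1)) := by
  induction N with
  | zero => simp
  | succ N ih =>
    have hmono : ∀ M ≤ N + 1,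
        (K ∩ ⋃ i ∈ Finset.range M, segment ℝ (p i) (p (i + 1))).Finite := by
      intro M hM
      apply hfin.subset
      apply Set.inter_subset_inter_right
      apply Set.biUnion_subset_biUnion_left
      intro i hi
      exact Finset.mem_range.mpr (lt_of_lt_of_le (Finset.mem_range.mp hi) hM)
    have ihN := ih (hmono N (Nat.le_succ N))
    have hlast : (K ∩ segment ℝ (p N) (p (N + 1))).Finite := by
      apply hfin.subset
      apply Set.inter_subset_inter_right
      intro x hx
      exact Set.mem_biUnion (Finset.self_mem_range_succ N) hx
    have hstep := seg_bound K L hL f hf hseg (p N) (p (N + 1)) hlast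
    calc |f (p 0) - f (p (N + 1))|
        ≤ |f (p 0) - f (p N)| + |f (p N) - f (p (N + 1))| := abs_sub_le _ _ _
      _ ≤ L * ∑ i ∈ Finset.range N, dist (p i) (p (i + 1))
          + L * dist (p N) (p (N + 1)) := add_le_add ihN hstep
      _ = L * ∑ i ∈ Finset.range (N + 1), dist (p i) (p (i + 1)) := by
          rw [Finset.sum_range_succ]; ring
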